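/- Let π : 𝒞 ⥤ I be a functor. (a) If π is a prefibration and i is an initial object of I, then the inclusion 𝒞_i ⥤ 𝒞 of the fiber over i admits a right adjoint. (b) Dually, if π is an opfibration (i.e. πᵒᵖ is a fibration) and i is a terminal object of I, then the inclusion 𝒞_i ⥤ 𝒞 admits a left adjoint. -/

import Mathlib

open CategoryTheory

namespace Paper

universe w v u v₁ u₁ v₂ u₂ v₃ u₃

variable {C : Type u₁} [Category.{v₁} C] {D : Type u₂} [Category.{v₂} D]
  {I : Type u₃} [Category.{v₃} I]

/-- A morphism `φ : a ⟶ b` is cartesian with respect to `π : C ⥤ I`. -/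
def IsCartesian (π : C ⥤ I) {a b : C} (φ : a ⟶ b) : Prop :=
  ∀ (a' : C) (φ' : a' ⟶ b) (h : π.obj a' = π.obj a),
    π.map φ' = eqToHom h ≫ π.map φ →
      ∃! ψ : a' ⟶ a, π.map ψ = eqToHom h ∧ ψ ≫ φ = φ'

/-- `π : C ⥤ I` is a prefibration: every morphism of `I` with prescribed target
admits a cartesian lift. -/
def IsPrefibration (π : C ⥤ I) : Prop :=
  ∀ (b : C) (i : I) (f : i ⟶ π.obj b),
    ∃ (a : C) (φ : a ⟶ b) (h : π.obj a = i),
      IsCartesian π φ ∧ π.map φ = eqToHom h ≫ f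

/-- `π : C ⥤ I` is a (Grothendieck) fibration: a prefibration such that the
composite of two cartesian morphisms is cartesian. -/
def IsFibration (π : C ⥤ I) : Prop :=
  IsPrefibration π ∧
    ∀ ⦃a b c : C⦄ (φ : a ⟶ b) (ψ : b ⟶ c),
      IsCartesian π φ → IsCartesian π ψ → IsCartesian π (φ ≫ ψ)

/-- The fiber of `π : C ⥤ I` over `i : I`. -/
def Fiber (π : C ⥤ I) (i : I) : Type u₁ := {c : C // π.obj c = i}

instance fiberCategory (π : C ⥤ I) (i : I) : Category.{v₁} (Fiber π i) where
  Hom a b := {φ : a.1 ⟶ b.1 // π.map φ = eqToHom (a.2.trans b.2.symm)}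
  id a := ⟨𝟙 a.1, by simp⟩
  comp f g := ⟨f.1 ≫ g.1, by rw [Functor.map_comp, f.2, g.2, eqToHom_trans]⟩
  id_comp f := Subtype.ext (Category.id_comp f.1)
  comp_id f := Subtype.ext (Category.comp_id f.1)
  assoc f g h := Subtype.ext (Category.assoc f.1 g.1 h.1)

/-- The inclusion of a fiber into the total category. -/
def fiberInclusion (π : C ⥤ I) (i : I) : Fiber π i ⥤ C where
  obj a := a.1
  map f := f.1

/-- Transition-functor data for a fibration: a functor between fibers together
with the cartesian lifts exhibiting it as a transition functor along `f`. -/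
structure TransitionData (π : C ⥤ I) {i i' : I} (f : i ⟶ i')
    (F : Fiber π i' ⥤ Fiber π i) where
  lift : ∀ c : Fiber π i', (F.obj c).1 ⟶ c.1
  cart : ∀ c, IsCartesian π (lift c)
  isOver : ∀ c, π.map (lift c) = eqToHom (F.obj c).2 ≫ f ≫ eqToHom c.2.symm
  nat : ∀ {c d : Fiber π i'} (u : c ⟶ d), (F.map u).1 ≫ lift d = lift c ≫ u.1

end Paper

namespace Paper

variable {C : Type u₁} [Category.{v₁} C] {I : Type u₃} [Category.{v₃} I]

/-- Constructor for morphisms in a fiber. -/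
def homMk {π : C ⥤ I} {i : I} {a b : Fiber π i} (f : a.1 ⟶ b.1)
    (hf : π.map f = eqToHom (a.2.trans b.2.symm)) : a ⟶ b := Subtype.mk f hf

theorem partA (π : C ⥤ I) (i : I) (hpre : IsPrefibration π)
    (hi : Limits.IsInitial i) : (fiberInclusion π i).IsLeftAdjoint := by
  have key : ∀ c : C, ∃ (a : Fiber π i) (φ : a.1 ⟶ c),
      ∀ (x : Fiber π i) (g : x.1 ⟶ c), ∃! ψ : x ⟶ a, ψ.1 ≫ φ = g := by
    intro c
    obtain ⟨a, φ, h, hcart, hover⟩ := hpre c i (hi.to (π.obj c))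
    refine ⟨⟨a, h⟩, φ, fun x g => ?_⟩
    have hx : π.obj x.1 = π.obj a := x.2.trans h.symm
    have hg : π.map g = eqToHom hx ≫ π.map φ := by
      have h1 : π.map g = eqToHom x.2 ≫ (eqToHom x.2.symm ≫ π.map g) := by simp
      rw [h1, hi.hom_ext (eqToHom x.2.symm ≫ π.map g) (hi.to _), hover,
        eqToHom_trans_assoc]
    obtain ⟨ψ, ⟨hψ1, hψ2⟩, huniq⟩ := hcart x.1 g hx hg
    refine ⟨homMk ψ hψ1, hψ2, fun ψ' hψ' => ?_⟩
    exact Subtype.ext (huniq ψ'.1 ⟨ψ'.2, hψ'⟩)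
  choose Gobj φc huniq using key
  let e : ∀ (X : Fiber π i) (Y : C),
      ((fiberInclusion π i).obj X ⟶ Y) ≃ (X ⟶ Gobj Y) := fun X Y =>
    { toFun := fun g => (huniq Y X g).choose
      invFun := fun ψ => ψ.1 ≫ φc Y
      left_inv := fun g => (huniq Y X g).choose_spec.1
      right_inv := fun ψ => ((huniq Y X (ψ.1 ≫ φc Y)).choose_spec.2 ψ rfl).symm }
  have he : ∀ (X' X : Fiber π i) (Y : C) (f : X' ⟶ X) (g : X.1 ⟶ Y),
      e X' Y ((fiberInclusion π i).map f ≫ g) = f ≫ e X Y g := by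
    intro X' X Y f g
    refine ((huniq Y X' (f.1 ≫ g)).choose_spec.2 (f ≫ e X Y g) ?_).symm
    show (f.1 ≫ ((huniq Y X g).choose).1) ≫ φc Y = f.1 ≫ g
    rw [Category.assoc, (huniq Y X g).choose_spec.1]
  exact (Adjunction.adjunctionOfEquivRight e he).isLeftAdjoint

theorem partB (π : C ⥤ I) (i : I) (hfib : IsFibration π.op)
    (hi : Limits.IsTerminal i) : (fiberInclusion π i).IsRightAdjoint := by
  have key : ∀ c : C, ∃ (a : Fiber π i) (φ : c ⟶ a.1),
      ∀ (x : Fiber π i) (g : c ⟶ x.1), ∃! ψ : a ⟶ x, φ ≫ ψ.1 = g := by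
    intro c
    obtain ⟨a, φ, h, hcart, hover⟩ :=
      hfib.1 (Opposite.op c) (Opposite.op i) (hi.from (π.obj c)).op
    have h' : π.obj a.unop = i := Opposite.op_injective h
    refine ⟨⟨a.unop, h'⟩, φ.unop, fun x g => ?_⟩
    have hx : π.op.obj (Opposite.op x.1) = π.op.obj a :=
      congrArg Opposite.op (x.2.trans h'.symm)
    have hover' : π.map φ.unop = hi.from (π.obj c) ≫ eqToHom h'.symm := by
      have := congrArg Quiver.Hom.unop hover
      simp only [Functor.op_map, Quiver.Hom.unop_op, unop_comp, eqToHom_unop] at this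
      rw [this]
    have hg : π.op.map g.op = eqToHom hx ≫ π.op.map φ := by
      apply Quiver.Hom.unop_inj
      simp only [Functor.op_map, Quiver.Hom.unop_op, unop_comp, eqToHom_unop]
      rw [hover']
      have h1 : π.map g = (π.map g ≫ eqToHom x.2) ≫ eqToHom x.2.symm := by simp
      rw [h1, hi.hom_ext (π.map g ≫ eqToHom x.2) (hi.from _), Category.assoc,
        eqToHom_trans]
    obtain ⟨ψ, ⟨hψ1, hψ2⟩, huniq⟩ := hcart (Opposite.op x.1) g.op hx hg
    have hψ1' : π.map ψ.unop = eqToHom (h'.trans x.2.symm) := by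
      have := congrArg Quiver.Hom.unop hψ1
      simp only [Functor.op_map, Quiver.Hom.unop_op, eqToHom_unop] at this
      rw [this]
    refine ⟨homMk ψ.unop hψ1', Quiver.Hom.op_inj (by simpa [homMk] using hψ2),
      fun ψ' hψ' => ?_⟩
    apply Subtype.ext
    apply Quiver.Hom.op_inj
    refine huniq ψ'.1.op ⟨?_, ?_⟩
    · apply Quiver.Hom.unop_inj
      simp only [Functor.op_map, Quiver.Hom.unop_op, eqToHom_unop]
      rw [ψ'.2]
    · apply Quiver.Hom.unop_inj
      simpa using hψ'
  choose Fobj u huniq using key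
  let e : ∀ (Y : C) (X : Fiber π i),
      (Fobj Y ⟶ X) ≃ (Y ⟶ (fiberInclusion π i).obj X) := fun Y X =>
    { toFun := fun ψ => u Y ≫ ψ.1
      invFun := fun g => (huniq Y X g).choose
      left_inv := fun ψ => ((huniq Y X (u Y ≫ ψ.1)).choose_spec.2 ψ rfl).symm
      right_inv := fun g => (huniq Y X g).choose_spec.1 }
  have he : ∀ (Y : C) (X X' : Fiber π i) (g : X ⟶ X') (f : Fobj Y ⟶ X),
      e Y X' (f ≫ g) = e Y X f ≫ (fiberInclusion π i).map g := by
    intro Y X X' g f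
    show u Y ≫ f.1 ≫ g.1 = (u Y ≫ f.1) ≫ g.1
    rw [Category.assoc]
  exact (Adjunction.adjunctionOfEquivLeft e he).isRightAdjoint

/-- (a) If `π` is a prefibration and `i` is an initial object of
`I`, then the inclusion of the fiber `𝒞_i` into `𝒞` admits a right adjoint.
(b) Dually, if `π` is an opfibration (i.e. `πᵒᵖ` is a fibration) and `i` is a
terminal object of `I`, then the inclusion `𝒞_i ⥤ 𝒞` admits a left adjoint. -/
theorem stmt4 (π : C ⥤ I) (i : I) :
    (IsPrefibration π → Nonempty (Limits.IsInitial i) →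
      (fiberInclusion π i).IsLeftAdjoint) ∧
    (IsFibration π.op → Nonempty (Limits.IsTerminal i) →
      (fiberInclusion π i).IsRightAdjoint) := by
  exact ⟨fun hpre ⟨hi⟩ => partA π i hpre hi, fun hfib ⟨hi⟩ => partB π i hfib hi⟩

end Paper
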